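/- Suppose |ψ⟩ satisfies P|ψ⟩ = 0 for each of the four squares appearing in the two SOS decompositions of η·1 − B_{[α,β]}, namely (η·1 − B_{[α,β]})|ψ⟩ = 0, (βA₁ − S₀)|ψ⟩ = 0, (2A₀ − (η/(2α))(B₀+B₁) + (β/2)S₁)|ψ⟩ = 0, and (2A₁ − (η/2)(B₀−B₁) + (β/2)S₂)|ψ⟩ = 0, with Z_A = A₀, X_A = A₁, Z_B = (B₀+B₁)/(2cosμ), X_B = (B₀−B₁)/(2sinμ), where cosμ = α/√(α²+sin²2θ), sinμ = sin2θ/√(α²+sin²2θ), β = 2cos2θ/√(α²+sin²2θ), η = 2(α²+1)/√(α²+sin²2θ). Then (Z_A − Z_B)|ψ⟩ = 0 and (sinθ·X_A(1+Z_B) − cosθ·X_B(1−Z_A))|ψ⟩ = 0. -/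

import Mathlib

open ContinuousLinearMap

set_option maxHeartbeats 1000000 in
theorem stmt_10 {H : Type*} [NormedAddCommGroup H] [InnerProductSpace ℂ H] [CompleteSpace H]
    (A₀ A₁ B₀ B₁ : H →L[ℂ] H)
    (hA₀ : IsSelfAdjoint A₀) (hA₁ : IsSelfAdjoint A₁)
    (hB₀ : IsSelfAdjoint B₀) (hB₁ : IsSelfAdjoint B₁)
    (hA₀2 : A₀ * A₀ = 1) (hA₁2 : A₁ * A₁ = 1) (hB₀2 : B₀ * B₀ = 1) (hB₁2 : B₁ * B₁ = 1)
    (hc00 : A₀ * B₀ = B₀ * A₀) (hc01 : A₀ * B₁ = B₁ * A₀)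
    (hc10 : A₁ * B₀ = B₀ * A₁) (hc11 : A₁ * B₁ = B₁ * A₁)
    (α θ : ℝ) (hα : 1 ≤ α) (hθ : θ ∈ Set.Ioc 0 (Real.pi / 4))
    (β η cμ sμ : ℝ)
    (hβ : β = 2 * Real.cos (2 * θ) / Real.sqrt (α ^ 2 + Real.sin (2 * θ) ^ 2))
    (hη : η = 2 * (α ^ 2 + 1) / Real.sqrt (α ^ 2 + Real.sin (2 * θ) ^ 2))
    (hcμ : cμ = α / Real.sqrt (α ^ 2 + Real.sin (2 * θ) ^ 2))
    (hsμ : sμ = Real.sin (2 * θ) / Real.sqrt (α ^ 2 + Real.sin (2 * θ) ^ 2))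
    (Bop S₀ S₁ S₂ ZA XA ZB XB : H →L[ℂ] H)
    (hBop : Bop = (β : ℂ) • A₀ + (α : ℂ) • (A₀ * B₀ + A₀ * B₁) + A₁ * B₀ - A₁ * B₁)
    (hS₀ : S₀ = A₀ * (B₀ - B₁) + (α⁻¹ : ℂ) • (A₁ * (B₀ + B₁)))
    (hS₁ : S₁ = (α⁻¹ : ℂ) • (A₀ * (B₀ + B₁)) - A₁ * (B₀ - B₁))
    (hS₂ : S₂ = A₀ * (B₀ - B₁) - (α : ℂ) • (A₁ * (B₀ + B₁)))
    (hZA : ZA = A₀) (hXA : XA = A₁)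
    (hZB : ZB = ((2 * cμ : ℝ)⁻¹ : ℂ) • (B₀ + B₁))
    (hXB : XB = ((2 * sμ : ℝ)⁻¹ : ℂ) • (B₀ - B₁))
    (ψ : H)
    (hP1 : ((η : ℂ) • (1 : H →L[ℂ] H) - Bop) ψ = 0)
    (hP2 : ((β : ℂ) • A₁ - S₀) ψ = 0)
    (hP3 : ((2 : ℂ) • A₀ - ((η / (2 * α) : ℝ) : ℂ) • (B₀ + B₁) + ((β / 2 : ℝ) : ℂ) • S₁) ψ = 0)
    (hP4 : ((2 : ℂ) • A₁ - ((η / 2 : ℝ) : ℂ) • (B₀ - B₁) + ((β / 2 : ℝ) : ℂ) • S₂) ψ = 0) :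
    (ZA - ZB) ψ = 0 ∧
    ((Real.sin θ : ℂ) • (XA * (1 + ZB)) - (Real.cos θ : ℂ) • (XB * (1 - ZA))) ψ = 0 := by
  obtain ⟨hθ0, hθ4⟩ := hθ
  have hpi := Real.pi_pos
  set σ := Real.sin (2 * θ) with hσ_def
  set γ := Real.cos (2 * θ) with hγ_def
  set st := Real.sin θ with hst_def
  set ct := Real.cos θ with hct_def
  set s := Real.sqrt (α ^ 2 + σ ^ 2) with hs_def
  -- positivity
  have hα0 : (0:ℝ) < α := lt_of_lt_of_le one_pos hα
  have hσ0 : (0:ℝ) < σ := Real.sin_pos_of_pos_of_lt_pi (by linarith) (by linarith)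
  have hst0 : (0:ℝ) < st := Real.sin_pos_of_pos_of_lt_pi (by linarith) (by linarith)
  have hct0 : (0:ℝ) < ct := Real.cos_pos_of_mem_Ioo ⟨by linarith, by linarith⟩
  have hs0 : (0:ℝ) < s := Real.sqrt_pos.mpr (by positivity)
  have hs2 : s ^ 2 = α ^ 2 + σ ^ 2 := Real.sq_sqrt (by positivity)
  -- scalar rewrites
  have h2cμ : (2 * cμ)⁻¹ = s / (2 * α) := by
    rw [hcμ]; field_simp
  have h2sμ : (2 * sμ)⁻¹ = s / (2 * σ) := by
    rw [hsμ]; field_simp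
  have hη2 : η / 2 = (α ^ 2 + 1) / s := by rw [hη]; ring
  have hη2α : η / (2 * α) = (α ^ 2 + 1) / (s * α) := by
    rw [hη]; field_simp
  have hβ2 : β / 2 = γ / s := by rw [hβ]; ring
  have h2cμC : ((2 * cμ : ℝ) : ℂ)⁻¹ = (s:ℂ) / (2*(α:ℂ)) := by
    rw [← Complex.ofReal_inv, h2cμ]; push_cast; ring
  have h2sμC : ((2 * sμ : ℝ) : ℂ)⁻¹ = (s:ℂ) / (2*(σ:ℂ)) := by
    rw [← Complex.ofReal_inv, h2sμ]; push_cast; ring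
  -- complex scalar facts
  have hs2C : (s:ℂ) ^ 2 = (α:ℂ) ^ 2 + (σ:ℂ) ^ 2 := by exact_mod_cast hs2
  have hpyC : (σ:ℂ) ^ 2 + (γ:ℂ) ^ 2 = 1 := by
    have := Real.sin_sq_add_cos_sq (2 * θ); exact_mod_cast this
  have hσC : (σ:ℂ) = 2 * (st:ℂ) * (ct:ℂ) := by
    have : σ = 2 * st * ct := Real.sin_two_mul θ; exact_mod_cast this
  have hγC : (γ:ℂ) = (ct:ℂ) ^ 2 - (st:ℂ) ^ 2 := by
    have : γ = ct ^ 2 - st ^ 2 := Real.cos_two_mul' θ; exact_mod_cast this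
  have hpy2C : (st:ℂ) ^ 2 + (ct:ℂ) ^ 2 = 1 := by
    have := Real.sin_sq_add_cos_sq θ; exact_mod_cast this
  have hsC : (s:ℂ) ≠ 0 := Complex.ofReal_ne_zero.mpr (ne_of_gt hs0)
  have hαC : (α:ℂ) ≠ 0 := Complex.ofReal_ne_zero.mpr (ne_of_gt hα0)
  have hσCne : (σ:ℂ) ≠ 0 := Complex.ofReal_ne_zero.mpr (ne_of_gt hσ0)
  have hstC : (st:ℂ) ≠ 0 := Complex.ofReal_ne_zero.mpr (ne_of_gt hst0)
  have hctC : (ct:ℂ) ≠ 0 := Complex.ofReal_ne_zero.mpr (ne_of_gt hct0)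
  have hα1C : (α:ℂ) ^ 2 + 1 ≠ 0 := by
    have h1 : ((α ^ 2 + 1 : ℝ) : ℂ) = (α:ℂ) ^ 2 + 1 := by push_cast; ring
    rw [← h1]
    exact Complex.ofReal_ne_zero.mpr (by positivity)
  have hγ1C : (γ:ℂ) = 1 - 2*(st:ℂ)^2 := by linear_combination hγC + hpy2C
  have hkey1 : (s:ℂ)^2 = (α:ℂ)^2 + 4*(st:ℂ)^2*(ct:ℂ)^2 := by
    linear_combination hs2C + ((σ:ℂ) + 2*(st:ℂ)*(ct:ℂ)) * hσC
  clear_value σ γ st ct s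
  -- pointwise operator lemmas
  have pb0a0 : ∀ v : H, B₀ (A₀ v) = A₀ (B₀ v) := fun v => by
    rw [← ContinuousLinearMap.mul_apply B₀ A₀, ← hc00, ContinuousLinearMap.mul_apply]
  have pb0a1 : ∀ v : H, B₀ (A₁ v) = A₁ (B₀ v) := fun v => by
    rw [← ContinuousLinearMap.mul_apply B₀ A₁, ← hc10, ContinuousLinearMap.mul_apply]
  have pb1a0 : ∀ v : H, B₁ (A₀ v) = A₀ (B₁ v) := fun v => by
    rw [← ContinuousLinearMap.mul_apply B₁ A₀, ← hc01, ContinuousLinearMap.mul_apply]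
  have pb1a1 : ∀ v : H, B₁ (A₁ v) = A₁ (B₁ v) := fun v => by
    rw [← ContinuousLinearMap.mul_apply B₁ A₁, ← hc11, ContinuousLinearMap.mul_apply]
  have sqa0 : ∀ v : H, A₀ (A₀ v) = v := fun v => by
    rw [← ContinuousLinearMap.mul_apply A₀ A₀, hA₀2, ContinuousLinearMap.one_apply]
  have sqb0 : ∀ v : H, B₀ (B₀ v) = v := fun v => by
    rw [← ContinuousLinearMap.mul_apply B₀ B₀, hB₀2, ContinuousLinearMap.one_apply]
  have sqb1 : ∀ v : H, B₁ (B₁ v) = v := fun v => by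
    rw [← ContinuousLinearMap.mul_apply B₁ B₁, hB₁2, ContinuousLinearMap.one_apply]
  constructor
  · -- Goal 1
    have comb1 : ((4*(α:ℂ)*((α:ℂ)^2+1)*(σ:ℂ)^2)) • ((ZA - ZB) ψ) =
        (-(s:ℂ)^2) • (B₀ (((η : ℂ) • (1 : H →L[ℂ] H) - Bop) ψ))
      + (-(s:ℂ)^2) • (B₁ (((η : ℂ) • (1 : H →L[ℂ] H) - Bop) ψ))
      + (-(α:ℂ)*(s:ℂ)^2) • (B₀ (((β : ℂ) • A₁ - S₀) ψ))
      - (-(α:ℂ)*(s:ℂ)^2) • (B₁ (((β : ℂ) • A₁ - S₀) ψ))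
      + (2*(α:ℂ)*(γ:ℂ)*(s:ℂ)^2) • (A₀ (((2 : ℂ) • A₀ - ((η / (2 * α) : ℝ) : ℂ) • (B₀ + B₁) + ((β / 2 : ℝ) : ℂ) • S₁) ψ))
      + (-2*(α:ℂ)*(γ:ℂ)*(s:ℂ)) • ((((η : ℂ) • (1 : H →L[ℂ] H) - Bop) ψ))
      + (-2*(α:ℂ)*(γ:ℂ)^2*(s:ℂ)) • (A₀ (((η : ℂ) • (1 : H →L[ℂ] H) - Bop) ψ)) := by
      rw [hZA, hZB, h2cμC, hBop, hS₀, hS₁, hη2α, hβ2, hβ, hη]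
      push_cast
      simp only [ContinuousLinearMap.sub_apply, ContinuousLinearMap.add_apply,
        ContinuousLinearMap.smul_apply, ContinuousLinearMap.mul_apply,
        ContinuousLinearMap.one_apply, Pi.add_apply, Pi.sub_apply, Pi.smul_apply,
        map_add, map_sub, map_smul,
        pb0a0, pb0a1, pb1a0, pb1a1, sqa0, sqb0, sqb1, smul_add, smul_sub,
        Function.comp_apply, id_eq]
      match_scalars
      all_goals field_simp
      all_goals try ring_nf
      · linear_combination (-4)*hs2C + (4*(α:ℂ)^2)*hpyC
      · linear_combination (-4*((α:ℂ)^2+1))*hpyC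
      · linear_combination (-4*((α:ℂ)^2+1))*hpyC
      · linear_combination (-4*(α:ℂ)*(γ:ℂ))*hs2C + (-4*(α:ℂ)*(γ:ℂ))*hpyC
    have hfin : ((4*(α:ℂ)*((α:ℂ)^2+1)*(σ:ℂ)^2)) • ((ZA - ZB) ψ) = 0 := by
      rw [comb1, hP1, hP2, hP3]
      simp
    have hC : (4*(α:ℂ)*((α:ℂ)^2+1)*(σ:ℂ)^2) ≠ 0 := by
      apply mul_ne_zero; apply mul_ne_zero; apply mul_ne_zero
      · norm_num
      · exact hαC
      · exact hα1C
      · exact pow_ne_zero _ hσCne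
    exact (smul_eq_zero.mp hfin).resolve_left hC
  · -- Goal 2
    have comb2 : ((4*(st:ℂ)*(α:ℂ)*((α:ℂ)^2+1))) • (((st : ℂ) • (XA * (1 + ZB)) - (ct : ℂ) • (XB * (1 - ZA))) ψ) =
        ((s:ℂ)*(α:ℂ)*((γ:ℂ)-(α:ℂ)^2-1)) • ((((β : ℂ) • A₁ - S₀)) ψ)
      + ((s:ℂ)^2*(α:ℂ)) • ((((2 : ℂ) • A₁ - ((η / 2 : ℝ) : ℂ) • (B₀ - B₁) + ((β / 2 : ℝ) : ℂ) • S₂)) ψ) := by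
      rw [hXA, hZA, hZB, hXB, h2cμC, h2sμC, hS₀, hS₂, hη2, hβ2, hβ]
      push_cast
      simp only [ContinuousLinearMap.sub_apply, ContinuousLinearMap.add_apply,
        ContinuousLinearMap.smul_apply, ContinuousLinearMap.mul_apply,
        ContinuousLinearMap.one_apply, Pi.add_apply, Pi.sub_apply, Pi.smul_apply,
        map_add, map_sub, map_smul,
        pb0a0, pb0a1, pb1a0, pb1a1, sqa0, sqb0, sqb1, smul_add, smul_sub,
        Function.comp_apply, id_eq]
      match_scalars
      all_goals field_simp
      all_goals try ring_nf
      · linear_combination (2*(1+(α:ℂ)^2))*hγ1C + (-2)*hs2C + (-2)*hpyC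
      · linear_combination (2*(1+(α:ℂ)^2))*hγ1C
      · linear_combination (2*(1+(α:ℂ)^2))*hγ1C
      · linear_combination 2*hσC
      · linear_combination (-2*((α:ℂ)^2+1))*hσC
      · linear_combination (-2)*hσC
      · linear_combination (2*((α:ℂ)^2+1))*hσC
    have hfin : ((4*(st:ℂ)*(α:ℂ)*((α:ℂ)^2+1))) • (((st : ℂ) • (XA * (1 + ZB)) - (ct : ℂ) • (XB * (1 - ZA))) ψ) = 0 := by
      rw [comb2, hP2, hP4]
      simp
    have hC : (4*(st:ℂ)*(α:ℂ)*((α:ℂ)^2+1)) ≠ 0 := by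
      apply mul_ne_zero; apply mul_ne_zero; apply mul_ne_zero
      · norm_num
      · exact hstC
      · exact hαC
      · exact hα1C
    exact (smul_eq_zero.mp hfin).resolve_left hC
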